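/- arXiv:1611.07758 — 3 statements merged into one kernel-verified Lean document; each statement's English description precedes it below -/
import Mathlib

section
/- With the notation of the context, I(w) = (1/(bg))·I(h₆ + h₇) − (1/(g(2b+g)))·I(h₆ + 2h₇), where w(t,s) = −1/((t−1)(t−s)). -/
open MeasureTheory

/-- The Dotsenko–Fateev weight `Φ(t,s) = |t|^a|s|^a|t−1|^b|s−1|^b|t−x|^c|s−y|^c|t−s|^g`. -/
noncomputable def dfWeight (a b c g x y : ℝ) (p : ℝ × ℝ) : ℝ :=
  |p.1| ^ a * |p.2| ^ a * |p.1 - 1| ^ b * |p.2 - 1| ^ b *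
    |p.1 - x| ^ c * |p.2 - y| ^ c * |p.1 - p.2| ^ g

/-- The complement in `ℝ²` of the seven lines `t=0, t=1, t=x, s=0, s=1, s=y, t=s`. -/
def dfComplement (x y : ℝ) : Set (ℝ × ℝ) :=
  {p | p.1 ≠ 0 ∧ p.1 ≠ 1 ∧ p.1 ≠ x ∧ p.2 ≠ 0 ∧ p.2 ≠ 1 ∧ p.2 ≠ y ∧ p.1 ≠ p.2}

/-- `I(h) = ∫_σ Φ h`. -/
noncomputable def dfInt (a b c g x y : ℝ) (σ : Set (ℝ × ℝ)) (h : ℝ × ℝ → ℝ) : ℝ :=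
  ∫ p in σ, dfWeight a b c g x y p * h p

/-- `h₁ = bc/((t−x)(s−1))`. -/
noncomputable def h1 (b c x : ℝ) (p : ℝ × ℝ) : ℝ := b * c / ((p.1 - x) * (p.2 - 1))

/-- `h₂ = bc/((t−1)(s−y))`. -/
noncomputable def h2 (b c y : ℝ) (p : ℝ × ℝ) : ℝ := b * c / ((p.1 - 1) * (p.2 - y))

/-- `h₃ = −cg/((t−x)(t−s))`. -/
noncomputable def h3 (c g x : ℝ) (p : ℝ × ℝ) : ℝ := -(c * g) / ((p.1 - x) * (p.1 - p.2))

/-- `h₄ = −cg/((s−y)(t−s))`. -/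
noncomputable def h4 (c g y : ℝ) (p : ℝ × ℝ) : ℝ := -(c * g) / ((p.2 - y) * (p.1 - p.2))

/-- `h₅ = c²/((t−x)(s−y))`. -/
noncomputable def h5 (c x y : ℝ) (p : ℝ × ℝ) : ℝ := c ^ 2 / ((p.1 - x) * (p.2 - y))

/-- `h₆ = −bg/((t−1)(t−s)) − bg/((s−1)(t−s))`. -/
noncomputable def h6 (b g : ℝ) (p : ℝ × ℝ) : ℝ :=
  -(b * g) / ((p.1 - 1) * (p.1 - p.2)) - b * g / ((p.2 - 1) * (p.1 - p.2))

/-- `h₇ = b²/((t−1)(s−1)) + bg/((s−1)(t−s))`. -/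
noncomputable def h7 (b g : ℝ) (p : ℝ × ℝ) : ℝ :=
  b ^ 2 / ((p.1 - 1) * (p.2 - 1)) + b * g / ((p.2 - 1) * (p.1 - p.2))

private lemma df_rpow_le {u D e f : ℝ} (hu : |u| ≤ D) (hD : 1 ≤ D) (he : 0 ≤ e) (hef : e ≤ f) :
    |u| ^ e ≤ D ^ f :=
  (Real.rpow_le_rpow (abs_nonneg u) hu he).trans (Real.rpow_le_rpow_of_exponent_le hD hef)

set_option maxHeartbeats 2000000 in
/-- the cohomological expansion ω₂₇ ∼ (1/(bg))(η₆+η₇) − (1/(g(2b+g)))(η₆+2η₇)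
integrated over a bounded chamber `σ` of the Dotsenko–Fateev arrangement. -/
theorem expansion_omega27 (x y a b c g : ℝ)
    (hx0 : x ≠ 0) (hx1 : x ≠ 1) (hy0 : y ≠ 0) (hy1 : y ≠ 1) (hxy : x ≠ y)
    (ha : 1 < a) (hb : 1 < b) (hc : 1 < c) (hg : 1 < g)
    (σ : Set (ℝ × ℝ)) (hbd : Bornology.IsBounded σ)
    (hcc : ∃ p ∈ dfComplement x y, σ = connectedComponentIn (dfComplement x y) p) :
    dfInt a b c g x y σ (fun p => -1 / ((p.1 - 1) * (p.1 - p.2))) =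
      (1 / (b * g)) * dfInt a b c g x y σ (fun p => h6 b g p + h7 b g p)
        - (1 / (g * (2 * b + g))) * dfInt a b c g x y σ (fun p => h6 b g p + 2 * h7 b g p) := by
  obtain ⟨p₀, hp₀, hσeq⟩ := hcc
  have hopenc : IsOpen (dfComplement x y) := by
    have he : dfComplement x y = {p : ℝ × ℝ | p.1 ≠ 0} ∩ {p | p.1 ≠ 1} ∩ {p | p.1 ≠ x} ∩
        {p | p.2 ≠ 0} ∩ {p | p.2 ≠ 1} ∩ {p | p.2 ≠ y} ∩ {p | p.1 ≠ p.2} := by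
      ext p; simp only [dfComplement, Set.mem_setOf_eq, Set.mem_inter_iff]; tauto
    rw [he]
    exact ((((((isOpen_ne_fun continuous_fst continuous_const).inter
      (isOpen_ne_fun continuous_fst continuous_const)).inter
      (isOpen_ne_fun continuous_fst continuous_const)).inter
      (isOpen_ne_fun continuous_snd continuous_const)).inter
      (isOpen_ne_fun continuous_snd continuous_const)).inter
      (isOpen_ne_fun continuous_snd continuous_const)).inter
      (isOpen_ne_fun continuous_fst continuous_snd)
  have hσo : IsOpen σ := by rw [hσeq]; exact hopenc.connectedComponentIn
  have hσm : MeasurableSet σ := hσo.measurableSet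
  have hsub : σ ⊆ dfComplement x y := by
    rw [hσeq]; exact connectedComponentIn_subset _ _
  have hb0 : b ≠ 0 := by positivity
  have hg0 : g ≠ 0 := by positivity
  have h2bg : 2 * b + g ≠ 0 := by positivity
  have ha' : (0:ℝ) ≤ a := by linarith
  have hc' : (0:ℝ) ≤ c := by linarith
  set Φ : ℝ × ℝ → ℝ := dfWeight a b c g x y with hΦ
  set W : ℝ × ℝ → ℝ := fun p => Φ p * (-1 / ((p.1 - 1) * (p.1 - p.2))) with hW
  set K : ℝ × ℝ → ℝ := fun p => Φ p * (1 / ((p.1 - 1) * (p.2 - 1))) with hK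
  have hΦmeas : Measurable Φ := by rw [hΦ]; unfold dfWeight; fun_prop
  have hΦnn : ∀ p, 0 ≤ Φ p := by
    intro p; rw [hΦ]; unfold dfWeight; positivity
  -- bounds
  obtain ⟨R, hR⟩ := hbd.subset_closedBall 0
  set D : ℝ := |x| + |y| + 2 * |R| + 2 with hDdef
  have hD1 : (1:ℝ) ≤ D := by
    have := abs_nonneg x; have := abs_nonneg y; have := abs_nonneg R
    rw [hDdef]; linarith
  have hD0 : (0:ℝ) < D := lt_of_lt_of_le one_pos hD1
  have nn : ∀ e : ℝ, (0:ℝ) ≤ D ^ e := fun e => Real.rpow_nonneg hD0.le e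
  have an : ∀ (u e : ℝ), (0:ℝ) ≤ |u| ^ e := fun u e => Real.rpow_nonneg (abs_nonneg u) e
  have hfac : ∀ p ∈ σ, |p.1| ≤ D ∧ |p.2| ≤ D ∧ |p.1 - 1| ≤ D ∧ |p.2 - 1| ≤ D ∧
      |p.1 - x| ≤ D ∧ |p.2 - y| ≤ D ∧ |p.1 - p.2| ≤ D := by
    intro p hp
    have hnp : ‖p‖ ≤ R := by
      have := hR hp
      rwa [Metric.mem_closedBall, dist_zero_right] at this
    have h1 : |p.1| ≤ |R| := by
      calc |p.1| = ‖p.1‖ := (Real.norm_eq_abs _).symm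
        _ ≤ ‖p‖ := norm_fst_le p
        _ ≤ R := hnp
        _ ≤ |R| := le_abs_self R
    have h2 : |p.2| ≤ |R| := by
      calc |p.2| = ‖p.2‖ := (Real.norm_eq_abs _).symm
        _ ≤ ‖p‖ := norm_snd_le p
        _ ≤ R := hnp
        _ ≤ |R| := le_abs_self R
    have e1 := abs_sub p.1 (1:ℝ)
    have e2 := abs_sub p.2 (1:ℝ)
    have e3 := abs_sub p.1 x
    have e4 := abs_sub p.2 y
    have e5 := abs_sub p.1 p.2
    rw [abs_one] at e1 e2
    have := abs_nonneg x; have := abs_nonneg y; have := abs_nonneg R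
    rw [hDdef]
    refine ⟨by linarith, by linarith, by linarith, by linarith, by linarith, by linarith,
      by linarith⟩
  set M : ℝ := D ^ a * D ^ a * D ^ b * D ^ b * D ^ c * D ^ c * D ^ g with hM
  have prodnn2 : (0:ℝ) ≤ D ^ a * D ^ a := mul_nonneg (nn a) (nn a)
  have prodnn3 : (0:ℝ) ≤ D ^ a * D ^ a * D ^ b := mul_nonneg prodnn2 (nn b)
  have prodnn4 : (0:ℝ) ≤ D ^ a * D ^ a * D ^ b * D ^ b := mul_nonneg prodnn3 (nn b)
  have prodnn5 : (0:ℝ) ≤ D ^ a * D ^ a * D ^ b * D ^ b * D ^ c := mul_nonneg prodnn4 (nn c)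
  have prodnn6 : (0:ℝ) ≤ D ^ a * D ^ a * D ^ b * D ^ b * D ^ c * D ^ c :=
    mul_nonneg prodnn5 (nn c)
  have hWb : ∀ p ∈ σ, ‖W p‖ ≤ M := by
    intro p hp
    obtain ⟨f1, f2, f3, f4, f5, f6, f7⟩ := hfac p hp
    obtain ⟨ht0, ht1, htx, hs0, hs1, hsy, hts⟩ := hsub hp
    have hu : (0:ℝ) < |p.1 - 1| := abs_pos.2 (sub_ne_zero.2 ht1)
    have hw2 : (0:ℝ) < |p.1 - p.2| := abs_pos.2 (sub_ne_zero.2 hts)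
    have hval : ‖W p‖ = |p.1| ^ a * |p.2| ^ a * |p.1 - 1| ^ (b - 1) * |p.2 - 1| ^ b *
        |p.1 - x| ^ c * |p.2 - y| ^ c * |p.1 - p.2| ^ (g - 1) := by
      rw [hW]
      simp only [Real.norm_eq_abs]
      rw [abs_mul, abs_of_nonneg (hΦnn p)]
      rw [hΦ]; unfold dfWeight
      rw [abs_div, abs_neg, abs_one, abs_mul,
        Real.rpow_sub hu, Real.rpow_sub hw2, Real.rpow_one]
      field_simp
      try ring
      exact Real.rpow_one _
    rw [hval, hM]
    exact mul_le_mul (mul_le_mul (mul_le_mul (mul_le_mul (mul_le_mul (mul_le_mul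
      (df_rpow_le f1 hD1 ha' le_rfl) (df_rpow_le f2 hD1 ha' le_rfl) (an _ _) (nn _))
      (df_rpow_le f3 hD1 (by linarith) (by linarith)) (an _ _) prodnn2)
      (df_rpow_le f4 hD1 (by linarith) le_rfl) (an _ _) prodnn3)
      (df_rpow_le f5 hD1 hc' le_rfl) (an _ _) prodnn4)
      (df_rpow_le f6 hD1 hc' le_rfl) (an _ _) prodnn5)
      (df_rpow_le f7 hD1 (by linarith) (by linarith)) (an _ _) prodnn6
  have hKb : ∀ p ∈ σ, ‖K p‖ ≤ M := by
    intro p hp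
    obtain ⟨f1, f2, f3, f4, f5, f6, f7⟩ := hfac p hp
    obtain ⟨ht0, ht1, htx, hs0, hs1, hsy, hts⟩ := hsub hp
    have hu : (0:ℝ) < |p.1 - 1| := abs_pos.2 (sub_ne_zero.2 ht1)
    have hv : (0:ℝ) < |p.2 - 1| := abs_pos.2 (sub_ne_zero.2 hs1)
    have hval : ‖K p‖ = |p.1| ^ a * |p.2| ^ a * |p.1 - 1| ^ (b - 1) * |p.2 - 1| ^ (b - 1) *
        |p.1 - x| ^ c * |p.2 - y| ^ c * |p.1 - p.2| ^ g := by
      rw [hK]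
      simp only [Real.norm_eq_abs]
      rw [abs_mul, abs_of_nonneg (hΦnn p)]
      rw [hΦ]; unfold dfWeight
      rw [abs_div, abs_one, abs_mul,
        Real.rpow_sub hu, Real.rpow_sub hv, Real.rpow_one]
      field_simp
      try ring
      exact Real.rpow_one _
    rw [hval, hM]
    exact mul_le_mul (mul_le_mul (mul_le_mul (mul_le_mul (mul_le_mul (mul_le_mul
      (df_rpow_le f1 hD1 ha' le_rfl) (df_rpow_le f2 hD1 ha' le_rfl) (an _ _) (nn _))
      (df_rpow_le f3 hD1 (by linarith) (by linarith)) (an _ _) prodnn2)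
      (df_rpow_le f4 hD1 (by linarith) (by linarith)) (an _ _) prodnn3)
      (df_rpow_le f5 hD1 hc' le_rfl) (an _ _) prodnn4)
      (df_rpow_le f6 hD1 hc' le_rfl) (an _ _) prodnn5)
      (df_rpow_le f7 hD1 (by linarith) le_rfl) (an _ _) prodnn6
  -- integrability
  have hWmeas : Measurable W := by
    rw [hW]
    exact hΦmeas.mul (by fun_prop : Measurable fun p : ℝ × ℝ => -1 / ((p.1 - 1) * (p.1 - p.2)))
  have hKmeas : Measurable K := by
    rw [hK]
    exact hΦmeas.mul (by fun_prop : Measurable fun p : ℝ × ℝ => 1 / ((p.1 - 1) * (p.2 - 1)))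
  have hiW : IntegrableOn W σ := Measure.integrableOn_of_bounded hbd.measure_lt_top.ne
    hWmeas.aestronglyMeasurable ((ae_restrict_iff' hσm).2 (ae_of_all _ hWb))
  have hiK : IntegrableOn K σ := Measure.integrableOn_of_bounded hbd.measure_lt_top.ne
    hKmeas.aestronglyMeasurable ((ae_restrict_iff' hσm).2 (ae_of_all _ hKb))
  -- pointwise identities on σ
  have e1id : Set.EqOn (fun p => Φ p * (h6 b g p + h7 b g p))
      (fun p => b * g * W p + b ^ 2 * K p) σ := by
    intro p hp
    obtain ⟨ht0, ht1, htx, hs0, hs1, hsy, hts⟩ := hsub hp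
    have hu : p.1 - 1 ≠ 0 := sub_ne_zero.2 ht1
    have hv : p.2 - 1 ≠ 0 := sub_ne_zero.2 hs1
    have hw2 : p.1 - p.2 ≠ 0 := sub_ne_zero.2 hts
    have hs : h6 b g p + h7 b g p = b * g * (-1 / ((p.1 - 1) * (p.1 - p.2)))
        + b ^ 2 * (1 / ((p.1 - 1) * (p.2 - 1))) := by
      simp only [h6, h7]; field_simp; try ring
    simp only [hW, hK]
    rw [hs]; ring
  have e2id : Set.EqOn (fun p => Φ p * (h6 b g p + 2 * h7 b g p))
      (fun p => b * (2 * b + g) * K p) σ := by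
    intro p hp
    obtain ⟨ht0, ht1, htx, hs0, hs1, hsy, hts⟩ := hsub hp
    have hu : p.1 - 1 ≠ 0 := sub_ne_zero.2 ht1
    have hv : p.2 - 1 ≠ 0 := sub_ne_zero.2 hs1
    have hw2 : p.1 - p.2 ≠ 0 := sub_ne_zero.2 hts
    have hs : h6 b g p + 2 * h7 b g p = b * (2 * b + g) * (1 / ((p.1 - 1) * (p.2 - 1))) := by
      simp only [h6, h7]; field_simp; try ring
    simp only [hK]
    rw [hs]; ring
  have hI1 : dfInt a b c g x y σ (fun p => h6 b g p + h7 b g p)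
      = b * g * (∫ p in σ, W p) + b ^ 2 * (∫ p in σ, K p) := by
    rw [dfInt, ← hΦ, setIntegral_congr_fun hσm e1id,
      integral_add (hiW.const_mul _) (hiK.const_mul _), integral_const_mul, integral_const_mul]
  have hI2 : dfInt a b c g x y σ (fun p => h6 b g p + 2 * h7 b g p)
      = b * (2 * b + g) * (∫ p in σ, K p) := by
    rw [dfInt, ← hΦ, setIntegral_congr_fun hσm e2id, integral_const_mul]
  have hL : dfInt a b c g x y σ (fun p => -1 / ((p.1 - 1) * (p.1 - p.2)))
      = ∫ p in σ, W p := by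
    rw [dfInt, ← hΦ]
  rw [hL, hI1, hI2]
  field_simp
  ring
end

section
/- With the notation of the context, I(w) = −(1/(bg))·I(h₇) + (1/(g(2b+g)))·I(h₆ + 2h₇), where w(t,s) = −1/((s−1)(t−s)). -/
open MeasureTheory

private lemma rpow_abs_le_reduce {u D e : ℝ} (hu : |u| ≤ D) (hD : 1 ≤ D) (he : 1 ≤ e) :
    |u| ^ e ≤ D ^ (e - 1) * |u| := by
  rcases eq_or_ne u 0 with rfl | h
  · simp [Real.zero_rpow (by linarith : e ≠ 0)]
  · have hpos : 0 < |u| := abs_pos.mpr h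
    have : |u| ^ e = |u| ^ (e - 1) * |u| := by
      nth_rewrite 3 [← Real.rpow_one |u|]
      rw [← Real.rpow_add hpos]; norm_num
    rw [this]
    have h1 : |u| ^ (e - 1) ≤ D ^ (e - 1) :=
      Real.rpow_le_rpow (abs_nonneg u) hu (by linarith)
    exact mul_le_mul_of_nonneg_right h1 (abs_nonneg u)

private lemma weight_nonneg (a b c g x y : ℝ) (p : ℝ × ℝ) :
    0 ≤ |p.1| ^ a * |p.2| ^ a * |p.1 - 1| ^ b * |p.2 - 1| ^ b *
    |p.1 - x| ^ c * |p.2 - y| ^ c * |p.1 - p.2| ^ g := by positivity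

private lemma integrableOn_weight_div {a b c g x y : ℝ}
    (ha : 0 ≤ a) (hb : 0 ≤ b) (hc : 0 ≤ c) (hg : 0 ≤ g)
    {σ : Set (ℝ × ℝ)} (hσ : MeasurableSet σ) (hfin : volume σ ≠ ⊤)
    {u v : ℝ × ℝ → ℝ} (hu : Measurable u) (hv : Measurable v) {M : ℝ} (hM : 0 ≤ M)
    (hbd : ∀ p ∈ σ, |p.1| ^ a * |p.2| ^ a * |p.1 - 1| ^ b * |p.2 - 1| ^ b *
      |p.1 - x| ^ c * |p.2 - y| ^ c * |p.1 - p.2| ^ g ≤ M * (|u p| * |v p|)) :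
    IntegrableOn (fun p : ℝ × ℝ => (|p.1| ^ a * |p.2| ^ a * |p.1 - 1| ^ b * |p.2 - 1| ^ b *
      |p.1 - x| ^ c * |p.2 - y| ^ c * |p.1 - p.2| ^ g) * (1 / (u p * v p))) σ := by
  have cW : Continuous fun p : ℝ × ℝ => |p.1| ^ a * |p.2| ^ a * |p.1 - 1| ^ b * |p.2 - 1| ^ b *
      |p.1 - x| ^ c * |p.2 - y| ^ c * |p.1 - p.2| ^ g := by
    have h1 : Continuous fun p : ℝ × ℝ => |p.1| ^ a :=
      (Real.continuous_rpow_const ha).comp continuous_fst.abs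
    have h2 : Continuous fun p : ℝ × ℝ => |p.2| ^ a :=
      (Real.continuous_rpow_const ha).comp continuous_snd.abs
    have h3 : Continuous fun p : ℝ × ℝ => |p.1 - 1| ^ b :=
      (Real.continuous_rpow_const hb).comp (continuous_fst.sub continuous_const).abs
    have h4 : Continuous fun p : ℝ × ℝ => |p.2 - 1| ^ b :=
      (Real.continuous_rpow_const hb).comp (continuous_snd.sub continuous_const).abs
    have h5 : Continuous fun p : ℝ × ℝ => |p.1 - x| ^ c :=
      (Real.continuous_rpow_const hc).comp (continuous_fst.sub continuous_const).abs
    have h6 : Continuous fun p : ℝ × ℝ => |p.2 - y| ^ c :=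
      (Real.continuous_rpow_const hc).comp (continuous_snd.sub continuous_const).abs
    have h7 : Continuous fun p : ℝ × ℝ => |p.1 - p.2| ^ g :=
      (Real.continuous_rpow_const hg).comp (continuous_fst.sub continuous_snd).abs
    exact ((((((h1.mul h2).mul h3).mul h4).mul h5).mul h6).mul h7)
  have hmeas : Measurable fun p : ℝ × ℝ => (|p.1| ^ a * |p.2| ^ a * |p.1 - 1| ^ b *
      |p.2 - 1| ^ b * |p.1 - x| ^ c * |p.2 - y| ^ c * |p.1 - p.2| ^ g) * (1 / (u p * v p)) :=
    cW.measurable.mul (measurable_const.div (hu.mul hv))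
  apply Measure.integrableOn_of_bounded (M := M) hfin hmeas.aestronglyMeasurable
  filter_upwards [ae_restrict_mem hσ] with p hp
  rw [Real.norm_eq_abs]
  rcases eq_or_ne (u p * v p) 0 with h0 | h0
  · simp [h0, hM]
  · have hpos : 0 < |u p * v p| := abs_pos.mpr h0
    rw [abs_mul, abs_one_div, abs_of_nonneg (weight_nonneg a b c g x y p), mul_one_div,
      div_le_iff₀ hpos, abs_mul]
    exact hbd p hp


set_option maxHeartbeats 2000000 in
/-- the cohomological expansion ω₅₇ ∼ −(1/(bg))η₇ + (1/(g(2b+g)))(η₆+2η₇)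
integrated over a bounded chamber `σ` of the Dotsenko–Fateev arrangement. -/
theorem expansion_omega57 (x y a b c g : ℝ)
    (hx0 : x ≠ 0) (hx1 : x ≠ 1) (hy0 : y ≠ 0) (hy1 : y ≠ 1) (hxy : x ≠ y)
    (ha : 1 < a) (hb : 1 < b) (hc : 1 < c) (hg : 1 < g)
    (σ : Set (ℝ × ℝ)) (hbd : Bornology.IsBounded σ)
    (hcc : ∃ p ∈ dfComplement x y, σ = connectedComponentIn (dfComplement x y) p) :
    dfInt a b c g x y σ (fun p => -1 / ((p.2 - 1) * (p.1 - p.2))) =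
      -(1 / (b * g)) * dfInt a b c g x y σ (fun p => h7 b g p)
        + (1 / (g * (2 * b + g))) * dfInt a b c g x y σ (fun p => h6 b g p + 2 * h7 b g p) := by
  -- basic nonzero facts about the exponents
  have hb0 : b ≠ 0 := by linarith
  have hg0 : g ≠ 0 := by linarith
  have hbg0 : b * g ≠ 0 := mul_ne_zero hb0 hg0
  have h2bg : 2 * b + g ≠ 0 := by positivity
  have hgbg : g * (2 * b + g) ≠ 0 := by positivity
  -- σ is open hence measurable, and has finite volume
  obtain ⟨p₀, hp₀, rfl⟩ := hcc
  set σ := connectedComponentIn (dfComplement x y) p₀ with hσdef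
  have hopen : IsOpen (dfComplement x y) := by
    have : dfComplement x y =
        {p : ℝ × ℝ | p.1 ≠ 0} ∩ ({p | p.1 ≠ 1} ∩ ({p | p.1 ≠ x} ∩ ({p | p.2 ≠ 0} ∩
          ({p | p.2 ≠ 1} ∩ ({p | p.2 ≠ y} ∩ {p | p.1 ≠ p.2}))))) := by
      rfl
    rw [this]
    refine (isOpen_ne_fun continuous_fst continuous_const).inter <|
      (isOpen_ne_fun continuous_fst continuous_const).inter <|
      (isOpen_ne_fun continuous_fst continuous_const).inter <|
      (isOpen_ne_fun continuous_snd continuous_const).inter <|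
      (isOpen_ne_fun continuous_snd continuous_const).inter <|
      (isOpen_ne_fun continuous_snd continuous_const).inter
      (isOpen_ne_fun continuous_fst continuous_snd)
  have hσopen : IsOpen σ := hopen.connectedComponentIn
  have hσm : MeasurableSet σ := hσopen.measurableSet
  have hfin : volume σ ≠ ⊤ := hbd.measure_lt_top.ne
  -- a uniform bound on the seven linear forms over σ
  obtain ⟨R, hR⟩ := hbd.subset_closedBall 0
  set D : ℝ := 2 * |R| + |x| + |y| + 2 with hDdef
  have hD1 : (1 : ℝ) ≤ D := by
    have := abs_nonneg R; have := abs_nonneg x; have := abs_nonneg y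
    simp only [hDdef]; linarith
  have hbounds : ∀ p ∈ σ, |p.1| ≤ D ∧ |p.2| ≤ D ∧ |p.1 - 1| ≤ D ∧ |p.2 - 1| ≤ D ∧
      |p.1 - x| ≤ D ∧ |p.2 - y| ≤ D ∧ |p.1 - p.2| ≤ D := by
    intro p hp
    have hball := hR hp
    rw [Metric.mem_closedBall, dist_zero_right] at hball
    have h1 : |p.1| ≤ |R| := (norm_fst_le p).trans (hball.trans (le_abs_self R))
    have h2 : |p.2| ≤ |R| := (norm_snd_le p).trans (hball.trans (le_abs_self R))
    have := abs_nonneg x; have := abs_nonneg y; have := abs_nonneg R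
    have d1 : |p.1 - 1| ≤ |p.1| + 1 := by
      calc |p.1 - 1| ≤ |p.1| + |(1:ℝ)| := abs_sub _ _
        _ = |p.1| + 1 := by norm_num
    have d2 : |p.2 - 1| ≤ |p.2| + 1 := by
      calc |p.2 - 1| ≤ |p.2| + |(1:ℝ)| := abs_sub _ _
        _ = |p.2| + 1 := by norm_num
    have d3 : |p.1 - x| ≤ |p.1| + |x| := abs_sub _ _
    have d4 : |p.2 - y| ≤ |p.2| + |y| := abs_sub _ _
    have d5 : |p.1 - p.2| ≤ |p.1| + |p.2| := abs_sub _ _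
    refine ⟨by simp only [hDdef]; linarith, by simp only [hDdef]; linarith,
      by simp only [hDdef]; linarith, by simp only [hDdef]; linarith,
      by simp only [hDdef]; linarith, by simp only [hDdef]; linarith,
      by simp only [hDdef]; linarith⟩
  -- integrability of the three basic integrands
  have ha0 : (0:ℝ) ≤ a := by linarith
  have hb0' : (0:ℝ) ≤ b := by linarith
  have hc0 : (0:ℝ) ≤ c := by linarith
  have hg0' : (0:ℝ) ≤ g := by linarith
  have hDpos : (0:ℝ) < D := by linarith
  -- G_A : factor 1/((t-1)(t-s))
  have intA : IntegrableOn (fun p : ℝ × ℝ => dfWeight a b c g x y p *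
      (1 / ((p.1 - 1) * (p.1 - p.2)))) σ := by
    refine integrableOn_weight_div ha0 hb0' hc0 hg0' hσm hfin
      ((measurable_fst.sub measurable_const)) ((measurable_fst.sub measurable_snd))
      (M := D ^ a * D ^ a * D ^ (b - 1) * D ^ b * D ^ c * D ^ c * D ^ (g - 1)) (by positivity) ?_
    intro p hp
    obtain ⟨B1, B2, B3, B4, B5, B6, B7⟩ := hbounds p hp
    have e1 : |p.1| ^ a ≤ D ^ a := Real.rpow_le_rpow (abs_nonneg _) B1 ha0
    have e2 : |p.2| ^ a ≤ D ^ a := Real.rpow_le_rpow (abs_nonneg _) B2 ha0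
    have e3 : |p.1 - 1| ^ b ≤ D ^ (b - 1) * |p.1 - 1| := rpow_abs_le_reduce B3 hD1 hb.le
    have e4 : |p.2 - 1| ^ b ≤ D ^ b := Real.rpow_le_rpow (abs_nonneg _) B4 hb0'
    have e5 : |p.1 - x| ^ c ≤ D ^ c := Real.rpow_le_rpow (abs_nonneg _) B5 hc0
    have e6 : |p.2 - y| ^ c ≤ D ^ c := Real.rpow_le_rpow (abs_nonneg _) B6 hc0
    have e7 : |p.1 - p.2| ^ g ≤ D ^ (g - 1) * |p.1 - p.2| := rpow_abs_le_reduce B7 hD1 hg.le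
    calc |p.1| ^ a * |p.2| ^ a * |p.1 - 1| ^ b * |p.2 - 1| ^ b *
        |p.1 - x| ^ c * |p.2 - y| ^ c * |p.1 - p.2| ^ g
        ≤ D ^ a * D ^ a * (D ^ (b - 1) * |p.1 - 1|) * D ^ b * D ^ c * D ^ c *
          (D ^ (g - 1) * |p.1 - p.2|) := by gcongr <;> positivity
      _ = D ^ a * D ^ a * D ^ (b - 1) * D ^ b * D ^ c * D ^ c * D ^ (g - 1) *
          (|p.1 - 1| * |p.1 - p.2|) := by ring
  -- G_B : factor 1/((s-1)(t-s))
  have intB : IntegrableOn (fun p : ℝ × ℝ => dfWeight a b c g x y p *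
      (1 / ((p.2 - 1) * (p.1 - p.2)))) σ := by
    refine integrableOn_weight_div ha0 hb0' hc0 hg0' hσm hfin
      ((measurable_snd.sub measurable_const)) ((measurable_fst.sub measurable_snd))
      (M := D ^ a * D ^ a * D ^ b * D ^ (b - 1) * D ^ c * D ^ c * D ^ (g - 1)) (by positivity) ?_
    intro p hp
    obtain ⟨B1, B2, B3, B4, B5, B6, B7⟩ := hbounds p hp
    have e1 : |p.1| ^ a ≤ D ^ a := Real.rpow_le_rpow (abs_nonneg _) B1 ha0
    have e2 : |p.2| ^ a ≤ D ^ a := Real.rpow_le_rpow (abs_nonneg _) B2 ha0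
    have e3 : |p.1 - 1| ^ b ≤ D ^ b := Real.rpow_le_rpow (abs_nonneg _) B3 hb0'
    have e4 : |p.2 - 1| ^ b ≤ D ^ (b - 1) * |p.2 - 1| := rpow_abs_le_reduce B4 hD1 hb.le
    have e5 : |p.1 - x| ^ c ≤ D ^ c := Real.rpow_le_rpow (abs_nonneg _) B5 hc0
    have e6 : |p.2 - y| ^ c ≤ D ^ c := Real.rpow_le_rpow (abs_nonneg _) B6 hc0
    have e7 : |p.1 - p.2| ^ g ≤ D ^ (g - 1) * |p.1 - p.2| := rpow_abs_le_reduce B7 hD1 hg.le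
    calc |p.1| ^ a * |p.2| ^ a * |p.1 - 1| ^ b * |p.2 - 1| ^ b *
        |p.1 - x| ^ c * |p.2 - y| ^ c * |p.1 - p.2| ^ g
        ≤ D ^ a * D ^ a * D ^ b * (D ^ (b - 1) * |p.2 - 1|) * D ^ c * D ^ c *
          (D ^ (g - 1) * |p.1 - p.2|) := by gcongr <;> positivity
      _ = D ^ a * D ^ a * D ^ b * D ^ (b - 1) * D ^ c * D ^ c * D ^ (g - 1) *
          (|p.2 - 1| * |p.1 - p.2|) := by ring
  -- G_C : factor 1/((t-1)(s-1))
  have intC : IntegrableOn (fun p : ℝ × ℝ => dfWeight a b c g x y p *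
      (1 / ((p.1 - 1) * (p.2 - 1)))) σ := by
    refine integrableOn_weight_div ha0 hb0' hc0 hg0' hσm hfin
      ((measurable_fst.sub measurable_const)) ((measurable_snd.sub measurable_const))
      (M := D ^ a * D ^ a * D ^ (b - 1) * D ^ (b - 1) * D ^ c * D ^ c * D ^ g) (by positivity) ?_
    intro p hp
    obtain ⟨B1, B2, B3, B4, B5, B6, B7⟩ := hbounds p hp
    have e1 : |p.1| ^ a ≤ D ^ a := Real.rpow_le_rpow (abs_nonneg _) B1 ha0
    have e2 : |p.2| ^ a ≤ D ^ a := Real.rpow_le_rpow (abs_nonneg _) B2 ha0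
    have e3 : |p.1 - 1| ^ b ≤ D ^ (b - 1) * |p.1 - 1| := rpow_abs_le_reduce B3 hD1 hb.le
    have e4 : |p.2 - 1| ^ b ≤ D ^ (b - 1) * |p.2 - 1| := rpow_abs_le_reduce B4 hD1 hb.le
    have e5 : |p.1 - x| ^ c ≤ D ^ c := Real.rpow_le_rpow (abs_nonneg _) B5 hc0
    have e6 : |p.2 - y| ^ c ≤ D ^ c := Real.rpow_le_rpow (abs_nonneg _) B6 hc0
    have e7 : |p.1 - p.2| ^ g ≤ D ^ g := Real.rpow_le_rpow (abs_nonneg _) B7 hg0'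
    calc |p.1| ^ a * |p.2| ^ a * |p.1 - 1| ^ b * |p.2 - 1| ^ b *
        |p.1 - x| ^ c * |p.2 - y| ^ c * |p.1 - p.2| ^ g
        ≤ D ^ a * D ^ a * (D ^ (b - 1) * |p.1 - 1|) * (D ^ (b - 1) * |p.2 - 1|) * D ^ c *
          D ^ c * D ^ g := by gcongr <;> positivity
      _ = D ^ a * D ^ a * D ^ (b - 1) * D ^ (b - 1) * D ^ c * D ^ c * D ^ g *
          (|p.1 - 1| * |p.2 - 1|) := by ring
  -- integrability of Φ·h₇ and Φ·(h₆+2h₇)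
  have hF7 : (fun p : ℝ × ℝ => dfWeight a b c g x y p * h7 b g p) =
      fun p => b ^ 2 * (dfWeight a b c g x y p * (1 / ((p.1 - 1) * (p.2 - 1)))) +
        (b * g) * (dfWeight a b c g x y p * (1 / ((p.2 - 1) * (p.1 - p.2)))) := by
    funext p; simp only [h7]; ring
  have intF7 : IntegrableOn (fun p : ℝ × ℝ => dfWeight a b c g x y p * h7 b g p) σ := by
    rw [hF7]; exact (intC.const_mul _).add (intB.const_mul _)
  have hF67 : (fun p : ℝ × ℝ => dfWeight a b c g x y p * (h6 b g p + 2 * h7 b g p)) =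
      fun p => (-(b * g)) * (dfWeight a b c g x y p * (1 / ((p.1 - 1) * (p.1 - p.2)))) +
        (b * g) * (dfWeight a b c g x y p * (1 / ((p.2 - 1) * (p.1 - p.2)))) +
        (2 * b ^ 2) * (dfWeight a b c g x y p * (1 / ((p.1 - 1) * (p.2 - 1)))) := by
    funext p; simp only [h6, h7]; ring
  have intF67 : IntegrableOn
      (fun p : ℝ × ℝ => dfWeight a b c g x y p * (h6 b g p + 2 * h7 b g p)) σ := by
    rw [hF67]; exact ((intA.const_mul _).add (intB.const_mul _)).add (intC.const_mul _)
  -- the pointwise identity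
  have hkey : ∀ p : ℝ × ℝ, dfWeight a b c g x y p * (-1 / ((p.2 - 1) * (p.1 - p.2))) =
      -(1 / (b * g)) * (dfWeight a b c g x y p * h7 b g p) +
        (1 / (g * (2 * b + g))) * (dfWeight a b c g x y p * (h6 b g p + 2 * h7 b g p)) := by
    intro p
    by_cases ht : p.1 = 1
    · have hW : dfWeight a b c g x y p = 0 := by
        simp [dfWeight, ht, Real.zero_rpow hb0]
      simp [hW]
    by_cases hs : p.2 = 1
    · have hW : dfWeight a b c g x y p = 0 := by
        simp [dfWeight, hs, Real.zero_rpow hb0]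
      simp [hW]
    by_cases hts : p.1 = p.2
    · have hW : dfWeight a b c g x y p = 0 := by
        simp [dfWeight, hts, Real.zero_rpow hg0]
      simp [hW]
    · have ht' : p.1 - 1 ≠ 0 := sub_ne_zero.mpr ht
      have hs' : p.2 - 1 ≠ 0 := sub_ne_zero.mpr hs
      have hts' : p.1 - p.2 ≠ 0 := sub_ne_zero.mpr hts
      simp only [h6, h7]
      field_simp
      ring
  -- conclude
  simp only [dfInt]
  rw [MeasureTheory.integral_congr_ae (Filter.Eventually.of_forall hkey),
    integral_add (intF7.const_mul _) (intF67.const_mul _),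
    integral_const_mul, integral_const_mul]
end

section
/- With the notation of the context, for every 1 ≤ k ≤ n: I(w_k) = (1/((2a_k+g)a_k))·I(Θ_k + 2Θ_{kk}), where w_k(t,s) = 1/((t−x_k)(s−x_k)). -/
open MeasureTheory

/-- The weight `Φ(t,s) = ∏_{i=0}^{n} |t−x_i|^{a_i}|s−x_i|^{a_i} · |t−s|^g` of the
arrangement of Section 6. -/
noncomputable def arrWeight (n : ℕ) (x a : ℕ → ℝ) (g : ℝ) (p : ℝ × ℝ) : ℝ :=
  (∏ i ∈ Finset.range (n + 1), (|p.1 - x i| ^ a i * |p.2 - x i| ^ a i)) * |p.1 - p.2| ^ g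

/-- The complement in `ℝ²` of the lines `t = x_i`, `s = x_i` (`0 ≤ i ≤ n`), `t = s`. -/
def arrComplement (n : ℕ) (x : ℕ → ℝ) : Set (ℝ × ℝ) :=
  {p | (∀ i ≤ n, p.1 ≠ x i ∧ p.2 ≠ x i) ∧ p.1 ≠ p.2}

/-- `Θ_{ij}`: the `dt∧ds`–coefficient of the β-nbc form `θ(V_i,H_j)` (including `i = j`). -/
noncomputable def ThetaIJ (x a : ℕ → ℝ) (g : ℝ) (i j : ℕ) (p : ℝ × ℝ) : ℝ :=
  if i = j then
    a i ^ 2 / ((p.1 - x i) * (p.2 - x i)) + a i * g / ((p.1 - p.2) * (p.2 - x i))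
  else a i * a j / ((p.1 - x i) * (p.2 - x j))

/-- `Θ_k`: the `dt∧ds`–coefficient of the β-nbc form `θ(V_k,D)`. -/
noncomputable def ThetaD (x a : ℕ → ℝ) (g : ℝ) (k : ℕ) (p : ℝ × ℝ) : ℝ :=
  -(a k) * g * (1 / ((p.1 - x k) * (p.1 - p.2)) + 1 / ((p.2 - x k) * (p.1 - p.2)))

lemma arrComplement_isOpen (n : ℕ) (x : ℕ → ℝ) : IsOpen (arrComplement n x) := by
  have h : arrComplement n x =
      (⋂ i ∈ Finset.range (n + 1),
        ({p : ℝ × ℝ | p.1 = x i}ᶜ ∩ {p : ℝ × ℝ | p.2 = x i}ᶜ)) ∩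
        {p : ℝ × ℝ | p.1 = p.2}ᶜ := by
    ext p
    simp only [arrComplement, Set.mem_setOf_eq, Set.mem_inter_iff, Set.mem_iInter,
      Set.mem_compl_iff, Finset.mem_range, Nat.lt_succ_iff]
  rw [h]
  refine IsOpen.inter ?_ (isClosed_eq continuous_fst continuous_snd).isOpen_compl
  refine isOpen_biInter_finset fun i _ => IsOpen.inter ?_ ?_
  · exact (isClosed_eq continuous_fst continuous_const).isOpen_compl
  · exact (isClosed_eq continuous_snd continuous_const).isOpen_compl

/-- the cohomological expansion
`V_k H_k ∼ (1/((2a_k+g)a_k))(θ(V_k,D) + 2θ(V_k,H_k))` of Section 6,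
integrated over a bounded chamber `σ` of the arrangement. -/
theorem expansion_VkHk (n : ℕ) (hn : 1 ≤ n) (x a : ℕ → ℝ) (g : ℝ)
    (hx0 : x 0 = 0) (hx1 : x 1 = 1)
    (hdist : ∀ i ≤ n, ∀ j ≤ n, i ≠ j → x i ≠ x j)
    (ha : ∀ i ≤ n, 1 < a i) (hg : 1 < g)
    (σ : Set (ℝ × ℝ)) (hbd : Bornology.IsBounded σ)
    (hcc : ∃ p ∈ arrComplement n x, σ = connectedComponentIn (arrComplement n x) p) :
    ∀ k, 1 ≤ k → k ≤ n →
      (∫ p in σ, arrWeight n x a g p * (1 / ((p.1 - x k) * (p.2 - x k)))) =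
        (1 / ((2 * a k + g) * a k)) *
          ∫ p in σ, arrWeight n x a g p * (ThetaD x a g k p + 2 * ThetaIJ x a g k k p) := by
  intro k hk1 hkn
  obtain ⟨p₀, hp₀, rfl⟩ := hcc
  have hopen : IsOpen (connectedComponentIn (arrComplement n x) p₀) :=
    (arrComplement_isOpen n x).connectedComponentIn
  have hsub : connectedComponentIn (arrComplement n x) p₀ ⊆ arrComplement n x :=
    connectedComponentIn_subset _ _
  rw [← integral_const_mul]
  refine setIntegral_congr_fun hopen.measurableSet fun p hp => ?_
  obtain ⟨h1, h2⟩ := hsub hp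
  have ht : p.1 - x k ≠ 0 := sub_ne_zero.mpr (h1 k hkn).1
  have hs : p.2 - x k ≠ 0 := sub_ne_zero.mpr (h1 k hkn).2
  have hts : p.1 - p.2 ≠ 0 := sub_ne_zero.mpr h2
  have hak : (1 : ℝ) < a k := ha k hkn
  have hak0 : a k ≠ 0 := by linarith
  have hsum : (2 * a k + g) ≠ 0 := by linarith
  simp only [ThetaD, ThetaIJ, if_pos rfl, ↓reduceIte]
  field_simp
  ring
end
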